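/- arXiv:math/0504164 — 2 statements merged into one kernel-verified Lean document; each statement's English description precedes it below -/
import Mathlib

section
/- If the sequences $\{x_n\}$ and $\{y_n\}$ of nonnegative reals are log-concave (with no internal zeros), then so is their binomial convolution $z_n = \sum_{k=0}^n \binom{n}{k} x_k y_{n-k}$. -/
namespace Stmt17

noncomputable def Cr (n : ℕ) (k : ℤ) : ℝ := if 0 ≤ k then (n.choose k.toNat : ℝ) else 0
noncomputable def Ext (x : ℕ → ℝ) (k : ℤ) : ℝ := if 0 ≤ k then x k.toNat else 0

lemma Cr_nonneg (n : ℕ) (k : ℤ) : 0 ≤ Cr n k := by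
  unfold Cr; split <;> positivity

lemma Ext_nonneg (x : ℕ → ℝ) (hx : ∀ k, 0 ≤ x k) (k : ℤ) : 0 ≤ Ext x k := by
  unfold Ext; split
  · exact hx _
  · exact le_rfl

lemma Ext_neg (x : ℕ → ℝ) (k : ℤ) (h : k < 0) : Ext x k = 0 := by
  unfold Ext; rw [if_neg (by omega)]

lemma Ext_ofNat (x : ℕ → ℝ) (m : ℕ) : Ext x (m : ℤ) = x m := by
  simp [Ext]

lemma Cr_neg (n : ℕ) (k : ℤ) (h : k < 0) : Cr n k = 0 := by
  unfold Cr; rw [if_neg (by omega)]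

lemma Cr_gt (n : ℕ) (k : ℤ) (h : (n : ℤ) < k) : Cr n k = 0 := by
  unfold Cr; split
  · rw [Nat.choose_eq_zero_of_lt (by omega)]; simp
  · rfl

lemma Cr_pascal (n : ℕ) (k : ℤ) : Cr (n+1) k = Cr n k + Cr n (k-1) := by
  rcases lt_or_ge k 0 with h | h
  · rw [Cr_neg _ _ h, Cr_neg _ _ h, Cr_neg _ _ (by omega)]; ring
  · rcases eq_or_lt_of_le h with h0 | h0
    · rw [← h0]; simp [Cr]
    · obtain ⟨m, rfl⟩ : ∃ m : ℕ, k = (m : ℤ) + 1 := ⟨(k-1).toNat, by omega⟩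
      have h1 : ((m:ℤ) + 1).toNat = m + 1 := by omega
      have h2 : ((m:ℤ) + 1 - 1).toNat = m := by omega
      unfold Cr
      rw [if_pos (by omega), if_pos (by omega), if_pos (by omega), h1, h2,
        Nat.choose_succ_succ]
      push_cast; ring

lemma Cr_ratio1 (n : ℕ) (k : ℤ) : ((n:ℝ)+1) * Cr n k = ((n:ℝ) + 1 - (k:ℝ)) * Cr (n+1) k := by
  rcases lt_or_ge k 0 with h | h
  · rw [Cr_neg _ _ h, Cr_neg _ _ h]; ring
  · obtain ⟨m, rfl⟩ : ∃ m : ℕ, k = (m : ℤ) := ⟨k.toNat, by omega⟩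
    unfold Cr
    rw [if_pos (by omega), if_pos (by omega), Int.toNat_natCast]
    rcases le_or_gt (m : ℤ) (n+1) with hm | hm
    · have := Nat.choose_mul_succ_eq n m
      have hcast := congrArg (fun t : ℕ => (t:ℝ)) this
      push_cast [Nat.cast_sub (by omega : m ≤ n+1)] at hcast
      push_cast
      linarith [hcast]
    · rw [Nat.choose_eq_zero_of_lt (by omega), Nat.choose_eq_zero_of_lt (by omega)]
      simp

lemma Cr_ratio2 (n : ℕ) (k : ℤ) : ((k:ℝ)+1) * Cr (n+1) (k+1) = ((n:ℝ)+1) * Cr n k := by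
  rcases lt_or_ge k (-1) with h | h
  · rw [Cr_neg _ _ (by omega), Cr_neg _ _ (by omega)]; ring
  · rcases eq_or_lt_of_le h with h0 | h0
    · rw [← h0]; rw [Cr_neg n (-1) (by omega)]; norm_num
    · obtain ⟨m, rfl⟩ : ∃ m : ℕ, k = (m : ℤ) := ⟨k.toNat, by omega⟩
      unfold Cr
      rw [if_pos (by omega), if_pos (by omega)]
      have h1 : ((m:ℤ) + 1).toNat = m + 1 := by omega
      rw [h1, Int.toNat_natCast]
      have := Nat.add_one_mul_choose_eq n m
      have hcast := congrArg (fun t : ℕ => (t:ℝ)) this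
      push_cast at hcast
      push_cast
      linarith [hcast]


lemma telescope (F : ℤ → ℝ) (a b : ℤ) (h : a - 1 ≤ b) :
    ∑ k ∈ Finset.Icc a b, (F k - F (k+1)) = F a - F (b+1) := by
  refine Int.le_induction (motive := fun b _ => ∑ k ∈ Finset.Icc a b, (F k - F (k+1)) = F a - F (b+1)) ?_ ?_ b h
  · show _ = _
    have he : Finset.Icc a (a-1) = ∅ := by apply Finset.Icc_eq_empty; omega
    rw [he]; simp
  · intro b hb ih
    show _ = _
    have hin : Finset.Icc a (b+1) = insert (b+1) (Finset.Icc a b) := by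
      ext t; simp only [Finset.mem_Icc, Finset.mem_insert]; omega
    rw [hin, Finset.sum_insert (by simp only [Finset.mem_Icc]; omega), ih]
    ring

lemma telescope' (F : ℤ → ℝ) (a b : ℤ) (h : a - 1 ≤ b) :
    ∑ k ∈ Finset.Icc a b, (F k - F (k-1)) = F b - F (a-1) := by
  refine Int.le_induction (motive := fun b _ => ∑ k ∈ Finset.Icc a b, (F k - F (k-1)) = F b - F (a-1)) ?_ ?_ b h
  · show _ = _
    have he : Finset.Icc a (a-1) = ∅ := by apply Finset.Icc_eq_empty; omega
    rw [he]; simp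
  · intro b hb ih
    show _ = _
    have hin : Finset.Icc a (b+1) = insert (b+1) (Finset.Icc a b) := by
      ext t; simp only [Finset.mem_Icc, Finset.mem_insert]; omega
    rw [hin, Finset.sum_insert (by simp only [Finset.mem_Icc]; omega), ih]
    have hb1 : b + 1 - 1 = b := by ring
    rw [hb1]; ring

lemma ineqI (n : ℕ) (j j' : ℤ) (h : j ≤ j') :
    Cr (n+1) j * Cr n j' ≤ Cr n j * Cr (n+1) j' := by
  have h1 := Cr_ratio1 n j
  have h2 := Cr_ratio1 n j'
  have key : ((n:ℝ)+1) * (Cr n j * Cr (n+1) j' - Cr (n+1) j * Cr n j')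
      = ((j':ℝ) - (j:ℝ)) * (Cr (n+1) j * Cr (n+1) j') := by
    linear_combination Cr (n+1) j' * h1 - Cr (n+1) j * h2
  have hj : (0:ℝ) ≤ (j':ℝ) - (j:ℝ) := by
    have : (j:ℝ) ≤ (j':ℝ) := by exact_mod_cast h
    linarith
  nlinarith [mul_nonneg (Cr_nonneg (n+1) j) (Cr_nonneg (n+1) j'),
    mul_nonneg hj (mul_nonneg (Cr_nonneg (n+1) j) (Cr_nonneg (n+1) j'))]

lemma ineqII (n : ℕ) (s a : ℤ) (h1 : 1 ≤ a) (h2 : 2*a ≤ s) :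
    Cr n (a-1) * Cr (n+1) (s-a+1) ≤ Cr n (s-a) * Cr (n+1) a := by
  have r1 := Cr_ratio2 n (a-1)
  have r2 := Cr_ratio2 n (s-a)
  rw [show a - 1 + 1 = a by ring] at r1
  have key : ((a:ℝ)) * ((s:ℝ)-(a:ℝ)+1) * (Cr n (s-a) * Cr (n+1) a - Cr n (a-1) * Cr (n+1) (s-a+1))
      = ((n:ℝ)+1) * ((s:ℝ) - 2*(a:ℝ) + 1) * (Cr n (a-1) * Cr n (s-a)) := by
    push_cast at r1 r2 ⊢
    linear_combination ((s:ℝ)-(a:ℝ)+1) * Cr n (s-a) * r1 - (a:ℝ) * Cr n (a-1) * r2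
  have ha : (1:ℝ) ≤ (a:ℝ) := by exact_mod_cast h1
  have hs : 2*(a:ℝ) ≤ (s:ℝ) := by exact_mod_cast h2
  have hpos : (0:ℝ) < (a:ℝ) * ((s:ℝ)-(a:ℝ)+1) := by nlinarith
  have hr : (0:ℝ) ≤ ((n:ℝ)+1) * ((s:ℝ) - 2*(a:ℝ) + 1) * (Cr n (a-1) * Cr n (s-a)) := by
    have hcc := mul_nonneg (Cr_nonneg n (a-1)) (Cr_nonneg n (s-a))
    have hn : (0:ℝ) ≤ (n:ℝ)+1 := by positivity
    have h21 : (0:ℝ) ≤ (s:ℝ) - 2*(a:ℝ) + 1 := by nlinarith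
    exact mul_nonneg (mul_nonneg hn h21) hcc
  nlinarith [key, hpos, hr]

lemma step_seq (x : ℕ → ℝ) (hx0 : ∀ k, 0 ≤ x k)
    (hlc : ∀ k : ℕ, x k * x (k + 2) ≤ x (k + 1) ^ 2)
    (hniz : ∀ i j k : ℕ, i < j → j < k → x i ≠ 0 → x k ≠ 0 → x j ≠ 0) :
    ∀ d a : ℕ, x a * x (a+d+2) ≤ x (a+1) * x (a+d+1) := by
  intro d
  induction d with
  | zero =>
      intro a
      have := hlc a
      rw [sq] at this
      simpa using this
  | succ d ih =>
      intro a
      have goal_eq1 : a + (d+1) + 2 = a + d + 3 := by omega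
      have goal_eq2 : a + (d+1) + 1 = a + d + 2 := by omega
      rw [goal_eq1, goal_eq2]
      by_cases hxa : x a = 0
      · rw [hxa, zero_mul]
        exact mul_nonneg (hx0 _) (hx0 _)
      by_cases hxb : x (a+d+3) = 0
      · rw [hxb, mul_zero]
        exact mul_nonneg (hx0 _) (hx0 _)
      have h1 : x (a+d+1) ≠ 0 := hniz a (a+d+1) (a+d+3) (by omega) (by omega) hxa hxb
      have h2 : x (a+d+2) ≠ 0 := hniz a (a+d+2) (a+d+3) (by omega) (by omega) hxa hxb
      have hp1 : 0 < x (a+d+1) := lt_of_le_of_ne (hx0 _) (Ne.symm h1)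
      have hp2 : 0 < x (a+d+2) := lt_of_le_of_ne (hx0 _) (Ne.symm h2)
      have F1 := ih a
      have F2 := hlc (a+d+1)
      have e1 : a + d + 1 + 2 = a + d + 3 := by omega
      have e2 : a + d + 1 + 1 = a + d + 2 := by omega
      rw [e1, e2, sq] at F2
      have key : (x a * x (a+d+3)) * (x (a+d+1) * x (a+d+2))
          ≤ (x (a+1) * x (a+d+2)) * (x (a+d+1) * x (a+d+2)) := by
        nlinarith [mul_nonneg (hx0 a) (hx0 (a+d+2)), mul_le_mul_of_nonneg_left F2
            (mul_nonneg (hx0 a) (hx0 (a+d+2))),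
          mul_le_mul_of_nonneg_right F1 (mul_nonneg hp2.le hp2.le)]
      exact le_of_mul_le_mul_right key (by positivity)

lemma indic (F : ℤ → ℝ) (s lo : ℤ) (hs : 0 ≤ s)
    (hzero : ∀ j, j < lo → F j = 0)
    (hsym : ∀ j, F (s - j) = F j) (k : ℤ) :
    F k = ∑ m ∈ Finset.Icc lo (s/2), (F m - F (m-1)) *
      (if m ≤ k ∧ k ≤ s - m then 1 else 0) := by
  set T := min k (s - k) with hT
  have hTs : T ≤ s / 2 := by omega
  have hFk : F k = F T := by
    rcases le_total k (s - k) with h | h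
    · rw [hT, min_eq_left h]
    · rw [hT, min_eq_right h, ← hsym k]
  have hsplit : ∀ m ∈ Finset.Icc lo (s/2),
      (F m - F (m-1)) * (if m ≤ k ∧ k ≤ s - m then 1 else 0)
      = if m ∈ Finset.Icc lo T then F m - F (m-1) else 0 := by
    intro m hm
    simp only [Finset.mem_Icc] at hm ⊢
    by_cases hmk : m ≤ k ∧ k ≤ s - m
    · rw [if_pos hmk, if_pos (by omega)]; ring
    · rw [if_neg hmk, if_neg (by omega)]; ring
  rw [Finset.sum_congr rfl hsplit, ← Finset.sum_filter,
    show Finset.filter (· ∈ Finset.Icc lo T) (Finset.Icc lo (s/2)) = Finset.Icc lo T by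
      ext t; simp only [Finset.mem_filter, Finset.mem_Icc]; omega]
  rcases lt_or_ge T (lo - 1) with hTlo | hTlo
  · have he : Finset.Icc lo T = ∅ := by apply Finset.Icc_eq_empty; omega
    rw [he, hFk, hzero T (by omega)]
    simp
  · rw [telescope' F lo T (by omega), hzero (lo - 1) (by omega), hFk]
    ring

lemma Qpos (n : ℕ) (s m m' : ℤ) (hm0 : 0 ≤ m) (hm2 : 2*m ≤ s)
    (hlo : s - (n:ℤ) - 2 ≤ m') (hm'2 : 2*m' ≤ s) :
    0 ≤ ∑ k ∈ Finset.Icc (0:ℤ) ((n:ℤ)+2),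
      (if m ≤ k ∧ k ≤ s - m then (1:ℝ) else 0) *
      (Cr (n+1) k * Cr (n+1) (s-k) * (if m' ≤ k ∧ k ≤ s - m' then 1 else 0)
       - Cr n k * Cr (n+2) (s-k) * (if m' ≤ k+1 ∧ k+1 ≤ s - m' then 1 else 0)) := by
  rcases le_or_gt m' m with hcase | hcase
  · -- m' ≤ m
    have hlow : ∀ k ∈ Finset.Icc (0:ℤ) ((n:ℤ)+2),
        (if m ≤ k ∧ k ≤ s - m then
          Cr (n+1) k * Cr (n+1) (s-k) - Cr n k * Cr (n+2) (s-k) else 0) ≤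
        (if m ≤ k ∧ k ≤ s - m then (1:ℝ) else 0) *
        (Cr (n+1) k * Cr (n+1) (s-k) * (if m' ≤ k ∧ k ≤ s - m' then 1 else 0)
         - Cr n k * Cr (n+2) (s-k) * (if m' ≤ k+1 ∧ k+1 ≤ s - m' then 1 else 0)) := by
      intro k _
      by_cases h1 : m ≤ k ∧ k ≤ s - m
      · rw [if_pos h1, if_pos h1, if_pos (show m' ≤ k ∧ k ≤ s - m' by omega)]
        by_cases h3 : m' ≤ k+1 ∧ k+1 ≤ s - m'
        · rw [if_pos h3]; ring_nf; exact le_rfl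
        · rw [if_neg h3]
          have := mul_nonneg (Cr_nonneg n k) (Cr_nonneg (n+2) (s-k))
          nlinarith
      · rw [if_neg h1, if_neg h1]
        simp
    refine le_trans ?_ (Finset.sum_le_sum hlow)
    rw [← Finset.sum_filter,
      show Finset.filter (fun k => m ≤ k ∧ k ≤ s - m) (Finset.Icc (0:ℤ) ((n:ℤ)+2))
          = Finset.Icc m (s-m) by
        ext t; simp only [Finset.mem_filter, Finset.mem_Icc]; omega]
    have hcong : ∀ k ∈ Finset.Icc m (s-m),
        Cr (n+1) k * Cr (n+1) (s-k) - Cr n k * Cr (n+2) (s-k)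
        = (fun t => Cr n (t-1) * Cr (n+1) (s-t)) k
          - (fun t => Cr n (t-1) * Cr (n+1) (s-t)) (k+1) := by
      intro k _
      simp only []
      rw [show k+1-1 = k by ring, show s-(k+1) = s-k-1 by ring]
      have p1 := Cr_pascal n k
      have p2 := Cr_pascal (n+1) (s-k)
      rw [show s-k-1 = s-k-1 by ring] at p2
      linear_combination Cr (n+1) (s-k) * p1 - Cr n k * p2
    rw [Finset.sum_congr rfl hcong, telescope _ m (s-m) (by omega)]
    rw [show s-(s-m+1) = m-1 by ring, show s-m+1-1 = s-m by ring]
    have := ineqI n (m-1) (s-m) (by omega)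
    linarith
  · -- m < m'
    have heq : ∀ k ∈ Finset.Icc (0:ℤ) ((n:ℤ)+2),
        (if m ≤ k ∧ k ≤ s - m then (1:ℝ) else 0) *
        (Cr (n+1) k * Cr (n+1) (s-k) * (if m' ≤ k ∧ k ≤ s - m' then 1 else 0)
         - Cr n k * Cr (n+2) (s-k) * (if m' ≤ k+1 ∧ k+1 ≤ s - m' then 1 else 0))
        = (if m' ≤ k ∧ k ≤ s - m' then Cr (n+1) k * Cr (n+1) (s-k) else 0)
          - (if m' - 1 ≤ k ∧ k ≤ s - m' - 1 then Cr n k * Cr (n+2) (s-k) else 0) := by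
      intro k _
      by_cases h1 : m ≤ k ∧ k ≤ s - m
      · rw [if_pos h1]
        by_cases h2 : m' ≤ k ∧ k ≤ s - m'
        · rw [if_pos h2, if_pos h2]
          by_cases h3 : m' ≤ k+1 ∧ k+1 ≤ s - m'
          · rw [if_pos h3, if_pos (show m' - 1 ≤ k ∧ k ≤ s - m' - 1 by omega)]; ring
          · rw [if_neg h3, if_neg (show ¬(m' - 1 ≤ k ∧ k ≤ s - m' - 1) by omega)]; ring
        · rw [if_neg h2, if_neg h2]
          by_cases h3 : m' ≤ k+1 ∧ k+1 ≤ s - m'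
          · rw [if_pos h3, if_pos (show m' - 1 ≤ k ∧ k ≤ s - m' - 1 by omega)]; ring
          · rw [if_neg h3, if_neg (show ¬(m' - 1 ≤ k ∧ k ≤ s - m' - 1) by omega)]; ring
      · rw [if_neg h1, zero_mul, if_neg (show ¬(m' ≤ k ∧ k ≤ s - m') by omega),
          if_neg (show ¬(m' - 1 ≤ k ∧ k ≤ s - m' - 1) by omega)]
        ring
    rw [Finset.sum_congr rfl heq, Finset.sum_sub_distrib, ← Finset.sum_filter,
      ← Finset.sum_filter,
      show Finset.filter (fun k => m' ≤ k ∧ k ≤ s - m') (Finset.Icc (0:ℤ) ((n:ℤ)+2))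
          = Finset.Icc m' (s-m') by
        ext t; simp only [Finset.mem_filter, Finset.mem_Icc]; omega,
      show Finset.filter (fun k => m' - 1 ≤ k ∧ k ≤ s - m' - 1) (Finset.Icc (0:ℤ) ((n:ℤ)+2))
          = Finset.Icc (m'-1) (s-m'-1) by
        ext t; simp only [Finset.mem_filter, Finset.mem_Icc]; omega]
    have hmap : ∑ k ∈ Finset.Icc (m'-1) (s-m'-1), Cr n k * Cr (n+2) (s-k)
        = ∑ k ∈ Finset.Icc m' (s-m'), Cr n (k-1) * Cr (n+2) (s-(k-1)) := by
      rw [show Finset.Icc (m'-1) (s-m'-1)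
            = (Finset.Icc m' (s-m')).map (addRightEmbedding (-1)) by
          rw [Finset.map_add_right_Icc]; congr 1 <;> ring,
        Finset.sum_map]
      refine Finset.sum_congr rfl fun k _ => ?_
      simp only [addRightEmbedding_apply]
      rw [show k + (-1) = k - 1 by ring]
    rw [hmap, ← Finset.sum_sub_distrib]
    have hcong : ∀ k ∈ Finset.Icc m' (s-m'),
        Cr (n+1) k * Cr (n+1) (s-k) - Cr n (k-1) * Cr (n+2) (s-(k-1))
        = (fun t => Cr n t * Cr (n+1) (s-t)) k
          - (fun t => Cr n t * Cr (n+1) (s-t)) (k-1) := by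
      intro k _
      simp only []
      rw [show s-(k-1) = s-k+1 by ring]
      have p1 := Cr_pascal n k
      have p2 := Cr_pascal (n+1) (s-k+1)
      rw [show s-k+1-1 = s-k by ring] at p2
      linear_combination Cr (n+1) (s-k) * p1 - Cr n (k-1) * p2
    rw [Finset.sum_congr rfl hcong, telescope' _ m' (s-m') (by omega)]
    rw [show s-(s-m') = m' by ring, show s-(m'-1) = s-m'+1 by ring]
    have := ineqII n s m' (by omega) (by omega)
    linarith

lemma delta_nonneg (x : ℕ → ℝ) (hx0 : ∀ k, 0 ≤ x k)
    (hlc : ∀ k : ℕ, x k * x (k + 2) ≤ x (k + 1) ^ 2)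
    (hniz : ∀ i j k : ℕ, i < j → j < k → x i ≠ 0 → x k ≠ 0 → x j ≠ 0)
    (s m : ℤ) (hm : 0 ≤ m) (h2 : 2*m ≤ s) :
    Ext x (m-1) * Ext x (s-m+1) ≤ Ext x m * Ext x (s-m) := by
  rcases eq_or_lt_of_le hm with h0 | h0
  · rw [Ext_neg x (m-1) (by omega), zero_mul]
    exact mul_nonneg (Ext_nonneg x hx0 _) (Ext_nonneg x hx0 _)
  · set a : ℕ := (m-1).toNat with ha
    set d : ℕ := (s-2*m).toNat with hd
    have e1 : m - 1 = ((a:ℕ) : ℤ) := by omega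
    have e2 : s - m + 1 = ((a + d + 2 : ℕ) : ℤ) := by omega
    have e3 : m = ((a + 1 : ℕ) : ℤ) := by omega
    have e4 : s - m = ((a + d + 1 : ℕ) : ℤ) := by omega
    rw [e1, e2, e4, e3, Ext_ofNat, Ext_ofNat, Ext_ofNat, Ext_ofNat]
    exact step_seq x hx0 hlc hniz d a

lemma eps_nonneg (y : ℕ → ℝ) (hy0 : ∀ k, 0 ≤ y k)
    (hlc : ∀ k : ℕ, y k * y (k + 2) ≤ y (k + 1) ^ 2)
    (hniz : ∀ i j k : ℕ, i < j → j < k → y i ≠ 0 → y k ≠ 0 → y j ≠ 0)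
    (n : ℕ) (s m' : ℤ) (h2 : 2*m' ≤ s) :
    Ext y ((n:ℤ)+1-(m'-1)) * Ext y ((n:ℤ)+1-s+(m'-1))
      ≤ Ext y ((n:ℤ)+1-m') * Ext y ((n:ℤ)+1-s+m') := by
  rcases lt_or_ge ((n:ℤ) - s + m') 0 with hc | hc
  · rw [show (n:ℤ)+1-s+(m'-1) = n-s+m' by ring, Ext_neg y ((n:ℤ)-s+m') (by omega), mul_zero]
    exact mul_nonneg (Ext_nonneg y hy0 _) (Ext_nonneg y hy0 _)
  · set a : ℕ := ((n:ℤ)-s+m').toNat with ha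
    set d : ℕ := (s-2*m').toNat with hd
    have hm'n : m' ≤ (n:ℤ) := by omega
    have e1 : (n:ℤ)+1-(m'-1) = ((a + d + 2 : ℕ) : ℤ) := by omega
    have e2 : (n:ℤ)+1-s+(m'-1) = ((a:ℕ) : ℤ) := by omega
    have e3 : (n:ℤ)+1-m' = ((a + d + 1 : ℕ) : ℤ) := by omega
    have e4 : (n:ℤ)+1-s+m' = ((a + 1 : ℕ) : ℤ) := by omega
    rw [e1, e2, e3, e4, Ext_ofNat, Ext_ofNat, Ext_ofNat, Ext_ofNat]
    calc y (a+d+2) * y a = y a * y (a+d+2) := by ring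
    _ ≤ y (a+1) * y (a+d+1) := step_seq y hy0 hlc hniz d a
    _ = y (a+d+1) * y (a+1) := by ring

lemma zIcc (x y : ℕ → ℝ) (z : ℕ → ℝ)
    (hz : ∀ n : ℕ, z n = ∑ k ∈ Finset.range (n + 1),
      (n.choose k : ℝ) * x k * y (n - k)) (p K : ℕ) (hpK : p ≤ K) :
    z p = ∑ k ∈ Finset.Icc (0:ℤ) (K:ℤ), Cr p k * Ext x k * Ext y ((p:ℤ) - k) := by
  rw [hz p]
  have h1 : ∑ k ∈ Finset.Icc (0:ℤ) ((p:ℕ):ℤ), Cr p k * Ext x k * Ext y ((p:ℤ) - k)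
      = ∑ k ∈ Finset.range (p+1), (p.choose k : ℝ) * x k * y (p - k) := by
    rw [show Finset.Icc (0:ℤ) ((p:ℕ):ℤ)
          = (Finset.range (p+1)).map ⟨(fun k => (k:ℤ) : ℕ → ℤ), Nat.cast_injective⟩ by
        ext t
        simp only [Finset.mem_Icc, Finset.mem_map, Finset.mem_range,
          Function.Embedding.coeFn_mk]
        constructor
        · rintro ⟨ht0, htp⟩
          exact ⟨t.toNat, by omega, by omega⟩
        · rintro ⟨a, ha, rfl⟩
          omega,
      Finset.sum_map]
    refine Finset.sum_congr rfl fun k hk => ?_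
    simp only [Function.Embedding.coeFn_mk, Finset.mem_range] at hk ⊢
    have hkp : k ≤ p := by omega
    have c1 : Cr p (k:ℤ) = (p.choose k : ℝ) := by
      unfold Cr; rw [if_pos (by omega), Int.toNat_natCast]
    have c2 : ((p:ℤ) - (k:ℤ)) = (((p - k : ℕ) : ℕ) : ℤ) := by omega
    rw [c1, Ext_ofNat, c2, Ext_ofNat]
  rw [← h1]
  apply Finset.sum_subset
  · apply Finset.Icc_subset_Icc (le_refl _) (by exact_mod_cast hpK)
  · intro k hk hnk
    simp only [Finset.mem_Icc] at hk hnk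
    rw [Cr_gt p k (by omega), zero_mul, zero_mul]

lemma prodsum (P Q : ℤ → ℝ) (K : ℤ) (hK : 0 ≤ K)
    (hQ : ∀ l, l < 0 ∨ K < l → Q l = 0) :
    (∑ k ∈ Finset.Icc (0:ℤ) K, P k) * (∑ l ∈ Finset.Icc (0:ℤ) K, Q l)
    = ∑ s ∈ Finset.Icc (0:ℤ) (2*K), ∑ k ∈ Finset.Icc (0:ℤ) K, P k * Q (s - k) := by
  rw [Finset.sum_mul_sum]
  have inner : ∀ k ∈ Finset.Icc (0:ℤ) K,
      ∑ l ∈ Finset.Icc (0:ℤ) K, P k * Q l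
        = ∑ s ∈ Finset.Icc (0:ℤ) (2*K), P k * Q (s - k) := by
    intro k hk
    simp only [Finset.mem_Icc] at hk
    have h1 : ∑ s ∈ Finset.Icc (0:ℤ) (2*K), P k * Q (s-k)
        = ∑ l ∈ Finset.Icc (-k) (2*K - k), P k * Q l := by
      rw [show Finset.Icc (-k) (2*K-k)
            = (Finset.Icc (0:ℤ) (2*K)).map (addRightEmbedding (-k)) by
          rw [Finset.map_add_right_Icc]; congr 1 <;> ring,
        Finset.sum_map]
      refine Finset.sum_congr rfl fun s _ => ?_
      simp only [addRightEmbedding_apply]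
      rw [show s + -k = s - k by ring]
    rw [h1]
    apply Finset.sum_subset
    · apply Finset.Icc_subset_Icc (by omega) (by omega)
    · intro l hl hnl
      simp only [Finset.mem_Icc] at hl hnl
      rw [hQ l (by omega), mul_zero]
  rw [Finset.sum_congr rfl inner, Finset.sum_comm]

end Stmt17


open Stmt17 in
open Stmt17 in
/-- Corollary 3.5: the binomial convolution of two nonnegative
log-concave sequences (with no internal zeros) is log-concave. -/
theorem stmt_17 (x y : ℕ → ℝ)
    (hxnonneg : ∀ k, 0 ≤ x k) (hynonneg : ∀ k, 0 ≤ y k)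
    (hxlc : ∀ k : ℕ, x k * x (k + 2) ≤ x (k + 1) ^ 2)
    (hylc : ∀ k : ℕ, y k * y (k + 2) ≤ y (k + 1) ^ 2)
    (hxniz : ∀ i j k : ℕ, i < j → j < k → x i ≠ 0 → x k ≠ 0 → x j ≠ 0)
    (hyniz : ∀ i j k : ℕ, i < j → j < k → y i ≠ 0 → y k ≠ 0 → y j ≠ 0)
    (z : ℕ → ℝ)
    (hz : ∀ n : ℕ, z n = ∑ k ∈ Finset.range (n + 1),
      (n.choose k : ℝ) * x k * y (n - k)) :
    ∀ n : ℕ, z n * z (n + 2) ≤ z (n + 1) ^ 2 := by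
  intro n
  rw [← sub_nonneg, pow_two]
  have h0 : z n = ∑ k ∈ Finset.Icc (0:ℤ) ((n:ℤ)+2),
      Cr n k * Ext x k * Ext y ((n:ℤ) - k) := by
    have h := Stmt17.zIcc x y z hz n (n+2) (by omega)
    push_cast at h; exact h
  have h1 : z (n+1) = ∑ k ∈ Finset.Icc (0:ℤ) ((n:ℤ)+2),
      Cr (n+1) k * Ext x k * Ext y ((n:ℤ)+1 - k) := by
    have h := Stmt17.zIcc x y z hz (n+1) (n+2) (by omega)
    push_cast at h; exact h
  have h2 : z (n+2) = ∑ k ∈ Finset.Icc (0:ℤ) ((n:ℤ)+2),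
      Cr (n+2) k * Ext x k * Ext y ((n:ℤ)+2 - k) := by
    have h := Stmt17.zIcc x y z hz (n+2) (n+2) (by omega)
    push_cast at h; exact h
  have E1 : z (n+1) * z (n+1) = ∑ s ∈ Finset.Icc (0:ℤ) (2*((n:ℤ)+2)),
      ∑ k ∈ Finset.Icc (0:ℤ) ((n:ℤ)+2),
        (Cr (n+1) k * Ext x k * Ext y ((n:ℤ)+1 - k)) *
        (Cr (n+1) (s-k) * Ext x (s-k) * Ext y ((n:ℤ)+1 - (s-k))) := by
    rw [h1]
    exact prodsum _ _ ((n:ℤ)+2) (by omega) (fun l hl => by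
      rcases hl with hl | hl
      · rw [Cr_neg (n+1) l hl, zero_mul, zero_mul]
      · rw [Cr_gt (n+1) l (by push_cast; omega), zero_mul, zero_mul])
  have E2 : z n * z (n+2) = ∑ s ∈ Finset.Icc (0:ℤ) (2*((n:ℤ)+2)),
      ∑ k ∈ Finset.Icc (0:ℤ) ((n:ℤ)+2),
        (Cr n k * Ext x k * Ext y ((n:ℤ) - k)) *
        (Cr (n+2) (s-k) * Ext x (s-k) * Ext y ((n:ℤ)+2 - (s-k))) := by
    rw [h0, h2]
    exact prodsum _ _ ((n:ℤ)+2) (by omega) (fun l hl => by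
      rcases hl with hl | hl
      · rw [Cr_neg (n+2) l hl, zero_mul, zero_mul]
      · rw [Cr_gt (n+2) l (by push_cast; omega), zero_mul, zero_mul])
  rw [E1, E2, ← Finset.sum_sub_distrib]
  apply Finset.sum_nonneg
  intro s hsmem
  simp only [Finset.mem_Icc] at hsmem
  rw [← Finset.sum_sub_distrib]
  -- indicator decompositions
  have hf : ∀ k : ℤ, Ext x k * Ext x (s - k)
      = ∑ m ∈ Finset.Icc (0:ℤ) (s/2),
          (Ext x m * Ext x (s - m) - Ext x (m-1) * Ext x (s - (m-1))) *
          (if m ≤ k ∧ k ≤ s - m then (1:ℝ) else 0) :=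
    fun k => indic (fun k => Ext x k * Ext x (s - k)) s 0 hsmem.1
      (fun j hj => by show Ext x j * Ext x (s - j) = 0; rw [Ext_neg x j hj, zero_mul])
      (fun j => by
        show Ext x (s-j) * Ext x (s - (s-j)) = Ext x j * Ext x (s - j)
        rw [show s - (s-j) = j by ring, mul_comm]) k
  have hG : ∀ j : ℤ, Ext y ((n:ℤ)+1-j) * Ext y ((n:ℤ)+1-s+j)
      = ∑ m' ∈ Finset.Icc (s-(n:ℤ)-2) (s/2),
          (Ext y ((n:ℤ)+1-m') * Ext y ((n:ℤ)+1-s+m')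
            - Ext y ((n:ℤ)+1-(m'-1)) * Ext y ((n:ℤ)+1-s+(m'-1))) *
          (if m' ≤ j ∧ j ≤ s - m' then (1:ℝ) else 0) :=
    fun j => indic (fun j => Ext y ((n:ℤ)+1-j) * Ext y ((n:ℤ)+1-s+j)) s (s-(n:ℤ)-2) hsmem.1
      (fun j hj => by
        show Ext y ((n:ℤ)+1-j) * Ext y ((n:ℤ)+1-s+j) = 0
        rw [Ext_neg y ((n:ℤ)+1-s+j) (by omega), mul_zero])
      (fun j => by
        show Ext y ((n:ℤ)+1-(s-j)) * Ext y ((n:ℤ)+1-s+(s-j))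
          = Ext y ((n:ℤ)+1-j) * Ext y ((n:ℤ)+1-s+j)
        rw [show (n:ℤ)+1-(s-j) = (n:ℤ)+1-s+j by ring,
          show (n:ℤ)+1-s+(s-j) = (n:ℤ)+1-j by ring, mul_comm]) j
  have key : ∑ k ∈ Finset.Icc (0:ℤ) ((n:ℤ)+2),
      ((Cr (n+1) k * Ext x k * Ext y ((n:ℤ)+1 - k)) *
        (Cr (n+1) (s-k) * Ext x (s-k) * Ext y ((n:ℤ)+1 - (s-k)))
      - (Cr n k * Ext x k * Ext y ((n:ℤ) - k)) *
        (Cr (n+2) (s-k) * Ext x (s-k) * Ext y ((n:ℤ)+2 - (s-k))))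
      = ∑ m ∈ Finset.Icc (0:ℤ) (s/2), ∑ m' ∈ Finset.Icc (s-(n:ℤ)-2) (s/2),
          (Ext x m * Ext x (s - m) - Ext x (m-1) * Ext x (s - (m-1))) *
          ((Ext y ((n:ℤ)+1-m') * Ext y ((n:ℤ)+1-s+m')
            - Ext y ((n:ℤ)+1-(m'-1)) * Ext y ((n:ℤ)+1-s+(m'-1)))) *
          (∑ k ∈ Finset.Icc (0:ℤ) ((n:ℤ)+2),
            (if m ≤ k ∧ k ≤ s - m then (1:ℝ) else 0) *
            (Cr (n+1) k * Cr (n+1) (s-k) * (if m' ≤ k ∧ k ≤ s - m' then 1 else 0)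
             - Cr n k * Cr (n+2) (s-k) * (if m' ≤ k+1 ∧ k+1 ≤ s - m' then 1 else 0))) := by
    have pointwise : ∀ k ∈ Finset.Icc (0:ℤ) ((n:ℤ)+2),
        ((Cr (n+1) k * Ext x k * Ext y ((n:ℤ)+1 - k)) *
          (Cr (n+1) (s-k) * Ext x (s-k) * Ext y ((n:ℤ)+1 - (s-k)))
        - (Cr n k * Ext x k * Ext y ((n:ℤ) - k)) *
          (Cr (n+2) (s-k) * Ext x (s-k) * Ext y ((n:ℤ)+2 - (s-k))))
        = ∑ m ∈ Finset.Icc (0:ℤ) (s/2), ∑ m' ∈ Finset.Icc (s-(n:ℤ)-2) (s/2),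
            (Ext x m * Ext x (s - m) - Ext x (m-1) * Ext x (s - (m-1))) *
            ((Ext y ((n:ℤ)+1-m') * Ext y ((n:ℤ)+1-s+m')
              - Ext y ((n:ℤ)+1-(m'-1)) * Ext y ((n:ℤ)+1-s+(m'-1)))) *
            ((if m ≤ k ∧ k ≤ s - m then (1:ℝ) else 0) *
            (Cr (n+1) k * Cr (n+1) (s-k) * (if m' ≤ k ∧ k ≤ s - m' then 1 else 0)
             - Cr n k * Cr (n+2) (s-k) * (if m' ≤ k+1 ∧ k+1 ≤ s - m' then 1 else 0))) := by
      intro k _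
      calc ((Cr (n+1) k * Ext x k * Ext y ((n:ℤ)+1 - k)) *
          (Cr (n+1) (s-k) * Ext x (s-k) * Ext y ((n:ℤ)+1 - (s-k)))
        - (Cr n k * Ext x k * Ext y ((n:ℤ) - k)) *
          (Cr (n+2) (s-k) * Ext x (s-k) * Ext y ((n:ℤ)+2 - (s-k))))
          = (Ext x k * Ext x (s-k)) *
            (Cr (n+1) k * Cr (n+1) (s-k) *
              (Ext y ((n:ℤ)+1-k) * Ext y ((n:ℤ)+1-s+k))
            - Cr n k * Cr (n+2) (s-k) *
              (Ext y ((n:ℤ)+1-(k+1)) * Ext y ((n:ℤ)+1-s+(k+1)))) := by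
            rw [show (n:ℤ)+1-(k+1) = (n:ℤ)-k by ring,
              show (n:ℤ)+1-s+(k+1) = (n:ℤ)+2 - (s-k) by ring,
              show (n:ℤ)+1 - (s-k) = (n:ℤ)+1-s+k by ring]
            ring
        _ = _ := by
            rw [hf k, hG k, hG (k+1), Finset.mul_sum, Finset.mul_sum,
              ← Finset.sum_sub_distrib, Finset.sum_mul_sum]
            refine Finset.sum_congr rfl fun m _ => Finset.sum_congr rfl fun m' _ => by ring
    rw [Finset.sum_congr rfl pointwise, Finset.sum_comm]
    refine Finset.sum_congr rfl fun m _ => ?_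
    rw [Finset.sum_comm]
    refine Finset.sum_congr rfl fun m' _ => ?_
    rw [← Finset.mul_sum]
  rw [key]
  apply Finset.sum_nonneg
  intro m hm
  simp only [Finset.mem_Icc] at hm
  apply Finset.sum_nonneg
  intro m' hm'
  simp only [Finset.mem_Icc] at hm'
  have hd : 0 ≤ Ext x m * Ext x (s - m) - Ext x (m-1) * Ext x (s - (m-1)) := by
    rw [show s - (m-1) = s - m + 1 by ring]
    exact sub_nonneg.mpr (delta_nonneg x hxnonneg hxlc hxniz s m hm.1 (by omega))
  have he : 0 ≤ Ext y ((n:ℤ)+1-m') * Ext y ((n:ℤ)+1-s+m')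
      - Ext y ((n:ℤ)+1-(m'-1)) * Ext y ((n:ℤ)+1-s+(m'-1)) :=
    sub_nonneg.mpr (eps_nonneg y hynonneg hylc hyniz n s m' (by omega))
  exact mul_nonneg (mul_nonneg hd he)
    (Qpos n s m m' hm.1 (by omega) (by omega) (by omega))
end

section
/- Let $a \ge b \ge 0$ be integers. If the sequences $\{x_k\}$ and $\{y_k\}$ of nonnegative reals are log-concave (with no internal zeros), then the sequence $z_n = \sum_{k=0}^n \binom{a-n}{b-k} x_k y_{n-k}$, defined for $0 \le n \le a$, is log-concave. -/
open Finset

/-- Real-valued binomial coefficient with integer lower index, zero outside range. -/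
noncomputable def Cz (m : ℕ) (j : ℤ) : ℝ := if 0 ≤ j ∧ j ≤ (m : ℤ) then (m.choose j.toNat : ℝ) else 0

lemma Cz_nonneg (m : ℕ) (j : ℤ) : 0 ≤ Cz m j := by
  unfold Cz; split <;> positivity

lemma Cz_coe (m j : ℕ) : Cz m (j : ℤ) = (m.choose j : ℝ) := by
  unfold Cz
  split
  · simp
  · next h =>
    push_neg at h
    have hj : (m : ℤ) < j := h (by positivity)
    rw [Nat.choose_eq_zero_of_lt (by exact_mod_cast hj)]
    simp

lemma Cz_neg (m : ℕ) (j : ℤ) (h : j < 0) : Cz m j = 0 := by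
  unfold Cz; rw [if_neg]; omega

lemma Cz_pascal (m : ℕ) (j : ℤ) : Cz (m + 1) j = Cz m j + Cz m (j - 1) := by
  rcases lt_or_ge j 0 with h | h
  · rw [Cz_neg _ _ h, Cz_neg _ _ h, Cz_neg _ _ (by omega)]; ring
  · lift j to ℕ using h with jn
    rcases jn with _ | k
    · rw [show ((0:ℕ):ℤ) - 1 = -1 by norm_num, Cz_neg m (-1) (by norm_num)]
      rw [show ((0:ℕ):ℤ) = ((0:ℕ):ℤ) from rfl, Cz_coe, Cz_coe]
      simp
    · have h1 : ((k + 1 : ℕ) : ℤ) - 1 = (k : ℤ) := by push_cast; ring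
      rw [h1, Cz_coe, Cz_coe, Cz_coe, Nat.choose_succ_succ' m k]
      push_cast; ring

lemma cross1_nat (m A B : ℕ) (hBA : B ≤ A) : m.choose A * (m+1).choose B ≤ (m+1).choose A * m.choose B := by
  have key : m.choose A * (m+1).choose B * (m+1) ≤ (m+1).choose A * m.choose B * (m+1) := by
    calc m.choose A * (m+1).choose B * (m+1)
        = (m+1).choose A * (m+1-A) * (m+1).choose B := by
          rw [mul_right_comm, Nat.choose_mul_succ_eq]
      _ ≤ (m+1).choose A * (m+1-B) * (m+1).choose B := by
          gcongr <;> omega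
      _ = (m+1).choose A * m.choose B * (m+1) := by
          rw [mul_assoc, mul_comm (m+1-B), ← Nat.choose_mul_succ_eq, ← mul_assoc]
  exact Nat.le_of_mul_le_mul_right key (by omega)

lemma cross2_nat (m A B : ℕ) (hBA : B ≤ A) : (m+1).choose (A+1) * m.choose B ≤ (m+1).choose (B+1) * m.choose A := by
  have key : (m+1) * ((m+1).choose (A+1) * m.choose B) ≤ (m+1) * ((m+1).choose (B+1) * m.choose A) := by
    calc (m+1) * ((m+1).choose (A+1) * m.choose B)
        = (m+1).choose (A+1) * ((m+1) * m.choose B) := by ring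
      _ = (m+1).choose (A+1) * ((m+1).choose (B+1) * (B+1)) := by rw [Nat.add_one_mul_choose_eq]
      _ ≤ (m+1).choose (A+1) * ((m+1).choose (B+1) * (A+1)) := by gcongr <;> omega
      _ = (m+1).choose (B+1) * ((m+1).choose (A+1) * (A+1)) := by ring
      _ = (m+1).choose (B+1) * ((m+1) * m.choose A) := by rw [Nat.add_one_mul_choose_eq]
      _ = (m+1) * ((m+1).choose (B+1) * m.choose A) := by ring
  exact Nat.le_of_mul_le_mul_left key (by omega)

lemma Cz_cross1 (m : ℕ) (α β : ℤ) (h : β ≤ α) : Cz m α * Cz (m+1) β ≤ Cz (m+1) α * Cz m β := by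
  rcases lt_or_ge β 0 with hβ | hβ
  · rw [Cz_neg _ _ hβ, Cz_neg _ _ hβ, mul_zero, mul_zero]
  · rw [show α = ((α.toNat : ℕ) : ℤ) by omega, show β = ((β.toNat : ℕ) : ℤ) by omega,
      Cz_coe, Cz_coe, Cz_coe, Cz_coe]
    exact_mod_cast cross1_nat m α.toNat β.toNat (by omega)

lemma Cz_cross2 (m : ℕ) (α β : ℤ) (h : β ≤ α) : Cz (m+1) (α+1) * Cz m β ≤ Cz (m+1) (β+1) * Cz m α := by
  rcases lt_or_ge β 0 with hβ | hβ
  · rw [Cz_neg _ _ hβ, mul_zero]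
    exact mul_nonneg (Cz_nonneg _ _) (Cz_nonneg _ _)
  · rw [show α = ((α.toNat : ℕ) : ℤ) by omega, show β = ((β.toNat : ℕ) : ℤ) by omega,
      show ((α.toNat : ℕ) : ℤ) + 1 = ((α.toNat + 1 : ℕ) : ℤ) by push_cast; ring,
      show ((β.toNat : ℕ) : ℤ) + 1 = ((β.toNat + 1 : ℕ) : ℤ) by push_cast; ring,
      Cz_coe, Cz_coe, Cz_coe, Cz_coe]
    exact_mod_cast cross2_nat m α.toNat β.toNat (by omega)

lemma icc_insert (L : ℤ) (N : ℕ) : Finset.Icc L (L + N) = insert (L + N) (Finset.Icc L (L + N - 1)) := by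
  ext s; simp only [Finset.mem_Icc, Finset.mem_insert]; omega

lemma tele_aux (f : ℤ → ℝ) : ∀ (N : ℕ) (L : ℤ), ∑ s ∈ Finset.Icc L (L + (N : ℤ) - 1), (f (s+1) - f s) = f (L + N) - f L := by
  intro N
  induction N with
  | zero => intro L; rw [Finset.Icc_eq_empty (by omega)]; simp
  | succ N ih =>
    intro L
    have e1 : L + ((N+1:ℕ) : ℤ) - 1 = L + (N:ℤ) := by push_cast; ring
    rw [e1, icc_insert L N, Finset.sum_insert (by simp only [Finset.mem_Icc]; omega), ih L,
      show L + ((N+1:ℕ) : ℤ) = (L + (N:ℤ)) + 1 by push_cast; ring]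
    ring

/-- Telescoping sum over an integer interval. -/
lemma tele (f : ℤ → ℝ) (L R : ℤ) (h : L ≤ R + 1) : ∑ s ∈ Finset.Icc L R, (f (s+1) - f s) = f (R+1) - f L := by
  obtain ⟨N, hN⟩ : ∃ N : ℕ, R = L + (N:ℤ) - 1 := ⟨(R+1-L).toNat, by omega⟩
  subst hN
  rw [tele_aux f N L, show L + (N:ℤ) - 1 + 1 = L + (N:ℤ) by ring]

lemma tele' (f : ℤ → ℝ) (L R : ℤ) (h : L ≤ R + 1) : ∑ s ∈ Finset.Icc L R, (f s - f (s+1)) = f L - f (R+1) := by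
  have h2 : ∀ s ∈ Finset.Icc L R, f s - f (s+1) = -(f (s+1) - f s) := fun s _ => by ring
  rw [Finset.sum_congr rfl h2, Finset.sum_neg_distrib, tele f L R h]
  ring

/-- Window sum: indicator times f over Icc. -/
lemma winsum (f : ℤ → ℝ) (L R A B : ℤ) :
    ∑ s ∈ Finset.Icc L R, (if A ≤ s ∧ s ≤ B then (1:ℝ) else 0) * f s
      = ∑ s ∈ Finset.Icc (max L A) (min R B), f s := by
  have h1 : ∀ s ∈ Finset.Icc L R, (if A ≤ s ∧ s ≤ B then (1:ℝ) else 0) * f s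
      = if s ∈ Finset.Icc A B then f s else 0 := by
    intro s _; simp only [Finset.mem_Icc]; split <;> simp
  rw [Finset.sum_congr rfl h1, Finset.sum_ite_mem,
    show Finset.Icc L R ∩ Finset.Icc A B = Finset.Icc (max L A) (min R B) by
      ext s; simp only [Finset.mem_Icc, Finset.mem_inter]; omega]

/-- Layer-cake decomposition of a symmetric unimodal-by-telescoping function. -/
lemma layer (h : ℤ → ℝ) (q L K : ℤ) (hsym : ∀ i, h i = h (q - i)) (hK : h (K+1) = 0)
    (i : ℤ) (hL : L ≤ i ∨ L ≤ q - i) (hiK : i ≤ K) (hqiK : q - i ≤ K) :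
    h i = ∑ c ∈ Finset.Icc L K, (h c - h (c+1)) * (if q - c ≤ i ∧ i ≤ c then (1:ℝ) else 0) := by
  have hLM : L ≤ max i (q - i) := by
    rcases hL with hL | hL
    · exact le_trans hL (le_max_left _ _)
    · exact le_trans hL (le_max_right _ _)
  have h1 : ∀ c ∈ Finset.Icc L K, (h c - h (c+1)) * (if q - c ≤ i ∧ i ≤ c then (1:ℝ) else 0)
      = if c ∈ Finset.Icc (max i (q-i)) K then (h c - h (c+1)) else 0 := by
    intro c hc
    simp only [Finset.mem_Icc] at hc ⊢
    by_cases hcc : q - c ≤ i ∧ i ≤ c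
    · rw [if_pos hcc, if_pos ⟨max_le_iff.mpr ⟨by omega, by omega⟩, hc.2⟩, mul_one]
    · rw [if_neg hcc, if_neg (by
        rintro ⟨h5, -⟩
        rw [max_le_iff] at h5
        exact hcc ⟨by omega, h5.1⟩), mul_zero]
  rw [Finset.sum_congr rfl h1, Finset.sum_ite_mem,
    Finset.inter_eq_right.mpr (Finset.Icc_subset_Icc hLM le_rfl),
    tele' h (max i (q-i)) K (le_trans (max_le hiK hqiK) (by omega)), hK, sub_zero]
  rcases le_total (q - i) i with hc | hc
  · rw [max_eq_left hc]
  · rw [max_eq_right hc, ← hsym i]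

/-- One-step spreading inequality for nonneg log-concave sequences without internal zeros. -/
lemma step1 (F : ℤ → ℝ) (h0 : ∀ k, 0 ≤ F k) (hlc : ∀ k : ℤ, F k * F (k+2) ≤ F (k+1)^2)
    (hniz : ∀ i j k : ℤ, i < j → j < k → F i ≠ 0 → F k ≠ 0 → F j ≠ 0)
    (i j : ℤ) (hij : i ≤ j) : F (i-1) * F (j+1) ≤ F i * F j := by
  rcases eq_or_ne (F (i-1)) 0 with h | hi0
  · rw [h, zero_mul]; exact mul_nonneg (h0 i) (h0 j)
  rcases eq_or_ne (F (j+1)) 0 with h | hj0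
  · rw [h, mul_zero]; exact mul_nonneg (h0 i) (h0 j)
  have hpos : ∀ t : ℤ, i-1 ≤ t → t ≤ j+1 → 0 < F t := by
    intro t h1 h2
    have : F t ≠ 0 := by
      by_cases ht1 : t = i - 1
      · rw [ht1]; exact hi0
      by_cases ht2 : t = j + 1
      · rw [ht2]; exact hj0
      exact hniz (i-1) t (j+1) (by omega) (by omega) hi0 hj0
    exact lt_of_le_of_ne (h0 t) (Ne.symm this)
  clear hi0 hj0
  suffices H : ∀ (d : ℕ) (a b : ℤ), b = a + d → (∀ t, a-1 ≤ t → t ≤ b+1 → 0 < F t) →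
      F (a-1) * F (b+1) ≤ F a * F b by
    exact H (j-i).toNat i j (by omega) hpos
  clear hpos hij i j
  intro d
  induction d with
  | zero =>
    intro a b hd hpos
    have hb : b = a := by omega
    subst hb
    have := hlc (b-1)
    rw [show b-1+2 = b+1 by ring, show b-1+1 = b by ring] at this
    nlinarith [this]
  | succ d ih =>
    intro a b hd hpos
    have h1 : F (a-1) * F b ≤ F a * F (b-1) := by
      have := ih a (b-1) (by omega) (fun t ht1 ht2 => hpos t ht1 (by omega))
      rw [show b - 1 + 1 = b by ring] at this; exact this
    have h2 : F (b-1) * F (b+1) ≤ F b ^ 2 := by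
      have := hlc (b-1)
      rw [show b-1+2 = b+1 by ring, show b-1+1 = b by ring] at this; exact this
    have hFb : 0 < F b := hpos b (by omega) (by omega)
    have hFb1 : 0 < F (b-1) := hpos (b-1) (by omega) (by omega)
    have key : (F (a-1) * F (b+1)) * (F (b-1) * F b) ≤ (F a * F b) * (F (b-1) * F b) := by
      calc (F (a-1) * F (b+1)) * (F (b-1) * F b) = (F (a-1) * F b) * (F (b-1) * F (b+1)) := by ring
        _ ≤ (F a * F (b-1)) * (F b ^ 2) :=
            mul_le_mul h1 h2 (mul_nonneg (h0 _) (h0 _)) (mul_nonneg (h0 _) (h0 _))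
        _ = (F a * F b) * (F (b-1) * F b) := by ring
    exact le_of_mul_le_mul_right key (by positivity)

noncomputable def phiC (m b : ℕ) (p s : ℤ) : ℝ := Cz (m+1) ((b:ℤ)-s) * Cz m ((b:ℤ)-p+s-1)
noncomputable def psiC (m b : ℕ) (p s : ℤ) : ℝ := Cz (m+1) ((b:ℤ)-s+1) * Cz m ((b:ℤ)-p+s-1)

lemma lemC1 (m b : ℕ) (p R : ℤ) :
    ∑ s ∈ Finset.Icc (p-R) R, Cz (m+2) ((b:ℤ)-s) * Cz m ((b:ℤ)-(p-s))
      ≤ ∑ s ∈ Finset.Icc (p-R) R, Cz (m+1) ((b:ℤ)-s) * Cz (m+1) ((b:ℤ)-(p-s)) := by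
  rcases lt_or_ge (2*R) (p-1) with hR | hR
  · rw [Finset.Icc_eq_empty (by omega)]; simp
  · rw [← sub_nonneg, ← Finset.sum_sub_distrib]
    have hcongr : ∀ s ∈ Finset.Icc (p-R) R,
        Cz (m+1) ((b:ℤ)-s) * Cz (m+1) ((b:ℤ)-(p-s)) - Cz (m+2) ((b:ℤ)-s) * Cz m ((b:ℤ)-(p-s))
          = phiC m b p s - phiC m b p (s+1) := by
      intro s _
      unfold phiC
      rw [show (b:ℤ)-(p-s) = (b:ℤ)-p+s by ring,
        show Cz (m+2) ((b:ℤ)-s) = Cz (m+1) ((b:ℤ)-s) + Cz (m+1) ((b:ℤ)-s-1) from by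
          rw [Cz_pascal (m+1) ((b:ℤ)-s)],
        Cz_pascal m ((b:ℤ)-p+s),
        show (b:ℤ)-(s+1) = (b:ℤ)-s-1 by ring,
        show (b:ℤ)-p+(s+1)-1 = (b:ℤ)-p+s by ring]
      ring
    rw [Finset.sum_congr rfl hcongr, tele' (phiC m b p) (p-R) R (by omega)]
    unfold phiC
    rw [show (b:ℤ)-(p-R) = (b:ℤ)-p+R by ring, show (b:ℤ)-p+(p-R)-1 = (b:ℤ)-R-1 by ring,
      show (b:ℤ)-(R+1) = (b:ℤ)-R-1 by ring, show (b:ℤ)-p+(R+1)-1 = (b:ℤ)-p+R by ring,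
      sub_nonneg]
    have := Cz_cross1 m ((b:ℤ)-p+R) ((b:ℤ)-R-1) (by omega)
    linarith [this]

lemma lemC2 (m b : ℕ) (p R : ℤ) :
    ∑ s ∈ Finset.Icc (p-R-1) (R-1), Cz (m+2) ((b:ℤ)-s) * Cz m ((b:ℤ)-(p-s))
      ≤ ∑ s ∈ Finset.Icc (p-R) R, Cz (m+1) ((b:ℤ)-s) * Cz (m+1) ((b:ℤ)-(p-s)) := by
  rcases lt_or_ge (2*R) (p-1) with hR | hR
  · rw [Finset.Icc_eq_empty (show ¬ (p-R-1 ≤ R-1) by omega), Finset.sum_empty]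
    exact Finset.sum_nonneg fun s _ => mul_nonneg (Cz_nonneg _ _) (Cz_nonneg _ _)
  · -- reindex the left sum over Icc (p-R) R via s ↦ s - 1
    have hmap : ∑ s ∈ Finset.Icc (p-R-1) (R-1), Cz (m+2) ((b:ℤ)-s) * Cz m ((b:ℤ)-(p-s))
        = ∑ s ∈ Finset.Icc (p-R) R, Cz (m+2) ((b:ℤ)-(s-1)) * Cz m ((b:ℤ)-(p-(s-1))) := by
      rw [show Finset.Icc (p-R-1) (R-1) = (Finset.Icc (p-R) R).map (addRightEmbedding (-1)) from by
        rw [Finset.map_add_right_Icc]; congr 1 <;> ring]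
      rw [Finset.sum_map]
      apply Finset.sum_congr rfl
      intro s _
      simp only [addRightEmbedding_apply]
      rw [show s + (-1) = s - 1 by ring]
    rw [hmap, ← sub_nonneg, ← Finset.sum_sub_distrib]
    have hcongr : ∀ s ∈ Finset.Icc (p-R) R,
        Cz (m+1) ((b:ℤ)-s) * Cz (m+1) ((b:ℤ)-(p-s)) - Cz (m+2) ((b:ℤ)-(s-1)) * Cz m ((b:ℤ)-(p-(s-1)))
          = psiC m b p (s+1) - psiC m b p s := by
      intro s _
      unfold psiC
      rw [show (b:ℤ)-(p-s) = (b:ℤ)-p+s by ring,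
        show (b:ℤ)-(s-1) = (b:ℤ)-s+1 by ring,
        show (b:ℤ)-(p-(s-1)) = (b:ℤ)-p+s-1 by ring,
        show Cz (m+2) ((b:ℤ)-s+1) = Cz (m+1) ((b:ℤ)-s+1) + Cz (m+1) ((b:ℤ)-s) from by
          rw [Cz_pascal (m+1) ((b:ℤ)-s+1), show (b:ℤ)-s+1-1 = (b:ℤ)-s by ring],
        Cz_pascal m ((b:ℤ)-p+s),
        show (b:ℤ)-(s+1)+1 = (b:ℤ)-s by ring,
        show (b:ℤ)-p+(s+1)-1 = (b:ℤ)-p+s by ring]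
      ring
    rw [Finset.sum_congr rfl hcongr, tele (psiC m b p) (p-R) R (by omega)]
    unfold psiC
    rw [show (b:ℤ)-(R+1)+1 = (b:ℤ)-R by ring, show (b:ℤ)-p+(R+1)-1 = (b:ℤ)-p+R by ring,
      show (b:ℤ)-(p-R)+1 = (b:ℤ)-p+R+1 by ring, show (b:ℤ)-p+(p-R)-1 = (b:ℤ)-R-1 by ring,
      sub_nonneg]
    have := Cz_cross2 m ((b:ℤ)-p+R) ((b:ℤ)-R-1) (by omega)
    rw [show (b:ℤ)-R-1+1 = (b:ℤ)-R by ring] at this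
    exact this

lemma perpW (b m : ℕ) (M N p q r : ℤ) (h : ℤ → ℝ)
    (hp0 : 0 ≤ p) (hN0 : 0 ≤ N) (hNM : N + 2 ≤ M)
    (hq : q = 2*N+2-p) (hrlow : p - M ≤ r) (hrM : r ≤ M)
    (hhsym : ∀ i, h i = h (q - i)) (hhK : h (2*M+3) = 0)
    (hhdec : ∀ c : ℤ, q ≤ 2*c → h (c+1) ≤ h c) :
    0 ≤ ∑ s ∈ Finset.Icc (p-r) r,
      (Cz (m+1) ((b:ℤ)-s) * Cz (m+1) ((b:ℤ)-(p-s)) * h (N+1-s)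
        - Cz (m+2) ((b:ℤ)-s) * Cz m ((b:ℤ)-(p-s)) * h (N-s)) := by
  set W := Finset.Icc (p-r) r with hW
  set C := Finset.Icc (-M) (2*M+2) with hC
  have hlay1 : ∀ s ∈ W, h (N+1-s) = ∑ c ∈ C, (h c - h (c+1)) *
      (if q - c ≤ N+1-s ∧ N+1-s ≤ c then (1:ℝ) else 0) := by
    intro s hs
    rw [hW, Finset.mem_Icc] at hs
    exact layer h q (-M) (2*M+2) hhsym (by rw [show 2*M+2+1 = 2*M+3 by ring]; exact hhK)
      (N+1-s) (Or.inl (by omega)) (by omega) (by omega)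
  have hlay0 : ∀ s ∈ W, h (N-s) = ∑ c ∈ C, (h c - h (c+1)) *
      (if q - c ≤ N-s ∧ N-s ≤ c then (1:ℝ) else 0) := by
    intro s hs
    rw [hW, Finset.mem_Icc] at hs
    exact layer h q (-M) (2*M+2) hhsym (by rw [show 2*M+2+1 = 2*M+3 by ring]; exact hhK)
      (N-s) (Or.inl (by omega)) (by omega) (by omega)
  have hcalc : ∑ s ∈ W,
      (Cz (m+1) ((b:ℤ)-s) * Cz (m+1) ((b:ℤ)-(p-s)) * h (N+1-s)
        - Cz (m+2) ((b:ℤ)-s) * Cz m ((b:ℤ)-(p-s)) * h (N-s))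
      = ∑ c ∈ C, (h c - h (c+1)) *
          ((∑ s ∈ W, (if q - c ≤ N+1-s ∧ N+1-s ≤ c then (1:ℝ) else 0)
              * (Cz (m+1) ((b:ℤ)-s) * Cz (m+1) ((b:ℤ)-(p-s))))
           - (∑ s ∈ W, (if q - c ≤ N-s ∧ N-s ≤ c then (1:ℝ) else 0)
              * (Cz (m+2) ((b:ℤ)-s) * Cz m ((b:ℤ)-(p-s))))) := by
    rw [Finset.sum_congr rfl (fun s hs => by
      rw [hlay1 s hs, hlay0 s hs, Finset.mul_sum, Finset.mul_sum, ← Finset.sum_sub_distrib])]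
    rw [Finset.sum_comm]
    refine Finset.sum_congr rfl (fun c _ => ?_)
    rw [mul_sub]
    calc ∑ s ∈ W,
        (Cz (m + 1) ((b:ℤ) - s) * Cz (m + 1) ((b:ℤ) - (p - s)) *
            ((h c - h (c + 1)) * if q - c ≤ N + 1 - s ∧ N + 1 - s ≤ c then (1:ℝ) else 0) -
          Cz (m + 2) ((b:ℤ) - s) * Cz m ((b:ℤ) - (p - s)) *
            ((h c - h (c + 1)) * if q - c ≤ N - s ∧ N - s ≤ c then (1:ℝ) else 0))
        = ∑ s ∈ W,
          ((h c - h (c + 1)) * ((if q - c ≤ N + 1 - s ∧ N + 1 - s ≤ c then (1:ℝ) else 0)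
              * (Cz (m + 1) ((b:ℤ) - s) * Cz (m + 1) ((b:ℤ) - (p - s))))
            - (h c - h (c + 1)) * ((if q - c ≤ N - s ∧ N - s ≤ c then (1:ℝ) else 0)
              * (Cz (m + 2) ((b:ℤ) - s) * Cz m ((b:ℤ) - (p - s))))) :=
          Finset.sum_congr rfl (fun s _ => by ring)
      _ = _ := by rw [Finset.sum_sub_distrib, ← Finset.mul_sum, ← Finset.mul_sum]
  rw [hcalc]
  apply Finset.sum_nonneg
  intro c hc
  rw [hC, Finset.mem_Icc] at hc
  -- rewrite the indicator conditions into s-interval form, and the sums into Icc sums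
  have hT1 : (∑ s ∈ W, (if q - c ≤ N+1-s ∧ N+1-s ≤ c then (1:ℝ) else 0)
      * (Cz (m+1) ((b:ℤ)-s) * Cz (m+1) ((b:ℤ)-(p-s))))
      = ∑ s ∈ Finset.Icc (max (p-r) (N+1-c)) (min r (p+c-N-1)),
          Cz (m+1) ((b:ℤ)-s) * Cz (m+1) ((b:ℤ)-(p-s)) := by
    rw [Finset.sum_congr rfl (fun s _ => by
      rw [show (if q - c ≤ N+1-s ∧ N+1-s ≤ c then (1:ℝ) else 0)
          = (if N+1-c ≤ s ∧ s ≤ p+c-N-1 then (1:ℝ) else 0) from by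
        refine if_congr ?_ rfl rfl
        constructor <;> (intro hh; constructor <;> omega)])]
    rw [hW, winsum]
  have hT0 : (∑ s ∈ W, (if q - c ≤ N-s ∧ N-s ≤ c then (1:ℝ) else 0)
      * (Cz (m+2) ((b:ℤ)-s) * Cz m ((b:ℤ)-(p-s))))
      = ∑ s ∈ Finset.Icc (max (p-r) (N-c)) (min r (p+c-N-2)),
          Cz (m+2) ((b:ℤ)-s) * Cz m ((b:ℤ)-(p-s)) := by
    rw [Finset.sum_congr rfl (fun s _ => by
      rw [show (if q - c ≤ N-s ∧ N-s ≤ c then (1:ℝ) else 0)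
          = (if N-c ≤ s ∧ s ≤ p+c-N-2 then (1:ℝ) else 0) from by
        refine if_congr ?_ rfl rfl
        constructor <;> (intro hh; constructor <;> omega)])]
    rw [hW, winsum]
  rw [hT1, hT0]
  rcases lt_or_ge (2*c) q with h2c | h2c
  · -- both windows empty
    have e1 : Finset.Icc (max (p-r) (N+1-c)) (min r (p+c-N-1)) = ∅ := by
      apply Finset.Icc_eq_empty
      intro hle
      have := le_trans (le_max_right (p-r) (N+1-c)) (le_trans hle (min_le_right r (p+c-N-1)))
      omega
    have e0 : Finset.Icc (max (p-r) (N-c)) (min r (p+c-N-2)) = ∅ := by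
      apply Finset.Icc_eq_empty
      intro hle
      have := le_trans (le_max_right (p-r) (N-c)) (le_trans hle (min_le_right r (p+c-N-2)))
      omega
    rw [e1, e0, Finset.sum_empty, Finset.sum_empty]
    norm_num
  · apply mul_nonneg (sub_nonneg.mpr (hhdec c h2c))
    rw [sub_nonneg]
    rcases le_or_gt r (p+c-N-2) with hcase | hcase
    · -- narrow window case: both windows are Icc (p-r) r
      rw [show max (p-r) (N+1-c) = p-r from max_eq_left (by omega),
        show min r (p+c-N-1) = r from min_eq_left (by omega),
        show max (p-r) (N-c) = p-r from max_eq_left (by omega),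
        show min r (p+c-N-2) = r from min_eq_left (by omega)]
      exact lemC1 m b p r
    · -- wide window case
      rw [show max (p-r) (N+1-c) = N+1-c from max_eq_right (by omega),
        show min r (p+c-N-1) = p+c-N-1 from min_eq_right (by omega)]
      have hsub : ∑ s ∈ Finset.Icc (max (p-r) (N-c)) (min r (p+c-N-2)),
            Cz (m+2) ((b:ℤ)-s) * Cz m ((b:ℤ)-(p-s))
          ≤ ∑ s ∈ Finset.Icc (p-(p+c-N-1)-1) ((p+c-N-1)-1),
            Cz (m+2) ((b:ℤ)-s) * Cz m ((b:ℤ)-(p-s)) := by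
        apply Finset.sum_le_sum_of_subset_of_nonneg
        · apply Finset.Icc_subset_Icc
          · exact le_trans (by omega) (le_max_right (p-r) (N-c))
          · exact le_trans (min_le_right r (p+c-N-2)) (by omega)
        · intro s _ _
          exact mul_nonneg (Cz_nonneg _ _) (Cz_nonneg _ _)
      refine le_trans hsub ?_
      rw [show N+1-c = p-(p+c-N-1) by ring]
      exact lemC2 m b p (p+c-N-1)

lemma perp (b m : ℕ) (M N p q : ℤ) (g h : ℤ → ℝ)
    (hp0 : 0 ≤ p) (hp2 : p ≤ 2*M) (hN0 : 0 ≤ N) (hNM : N + 2 ≤ M)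
    (hq : q = 2*N+2-p)
    (hgsym : ∀ s, g s = g (p - s)) (hhsym : ∀ i, h i = h (q - i))
    (hgM : g (M+1) = 0) (hhK : h (2*M+3) = 0)
    (hgdec : ∀ r : ℤ, p ≤ 2*r → g (r+1) ≤ g r)
    (hhdec : ∀ c : ℤ, q ≤ 2*c → h (c+1) ≤ h c) :
    ∑ s ∈ Finset.Icc (p-M) M, Cz (m+2) ((b:ℤ)-s) * Cz m ((b:ℤ)-(p-s)) * (g s * h (N-s))
      ≤ ∑ s ∈ Finset.Icc (p-M) M, Cz (m+1) ((b:ℤ)-s) * Cz (m+1) ((b:ℤ)-(p-s)) * (g s * h (N+1-s)) := by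
  rw [← sub_nonneg, ← Finset.sum_sub_distrib]
  set S := Finset.Icc (p-M) M with hS
  have hglayer : ∀ s ∈ S, g s = ∑ r ∈ S, (g r - g (r+1)) *
      (if p - r ≤ s ∧ s ≤ r then (1:ℝ) else 0) := by
    intro s hs
    rw [hS, Finset.mem_Icc] at hs
    exact layer g p (p-M) M hgsym hgM s (Or.inr (by omega)) hs.2 (by omega)
  have hcalc : ∑ s ∈ S,
      (Cz (m+1) ((b:ℤ)-s) * Cz (m+1) ((b:ℤ)-(p-s)) * (g s * h (N+1-s))
        - Cz (m+2) ((b:ℤ)-s) * Cz m ((b:ℤ)-(p-s)) * (g s * h (N-s)))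
      = ∑ r ∈ S, (g r - g (r+1)) *
          ∑ s ∈ S, (if p - r ≤ s ∧ s ≤ r then (1:ℝ) else 0) *
            (Cz (m+1) ((b:ℤ)-s) * Cz (m+1) ((b:ℤ)-(p-s)) * h (N+1-s)
              - Cz (m+2) ((b:ℤ)-s) * Cz m ((b:ℤ)-(p-s)) * h (N-s)) := by
    rw [Finset.sum_congr rfl (fun s hs => by
      rw [show Cz (m+1) ((b:ℤ)-s) * Cz (m+1) ((b:ℤ)-(p-s)) * (g s * h (N+1-s))
            - Cz (m+2) ((b:ℤ)-s) * Cz m ((b:ℤ)-(p-s)) * (g s * h (N-s))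
          = (Cz (m+1) ((b:ℤ)-s) * Cz (m+1) ((b:ℤ)-(p-s)) * h (N+1-s)
              - Cz (m+2) ((b:ℤ)-s) * Cz m ((b:ℤ)-(p-s)) * h (N-s)) * g s from by ring,
        hglayer s hs, Finset.mul_sum])]
    rw [Finset.sum_comm]
    refine Finset.sum_congr rfl (fun r _ => ?_)
    rw [Finset.mul_sum]
    refine Finset.sum_congr rfl (fun s _ => by ring)
  rw [hcalc]
  apply Finset.sum_nonneg
  intro r hr
  rw [hS, Finset.mem_Icc] at hr
  have hwin : ∑ s ∈ S, (if p - r ≤ s ∧ s ≤ r then (1:ℝ) else 0) *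
      (Cz (m+1) ((b:ℤ)-s) * Cz (m+1) ((b:ℤ)-(p-s)) * h (N+1-s)
        - Cz (m+2) ((b:ℤ)-s) * Cz m ((b:ℤ)-(p-s)) * h (N-s))
      = ∑ s ∈ Finset.Icc (p-r) r,
        (Cz (m+1) ((b:ℤ)-s) * Cz (m+1) ((b:ℤ)-(p-s)) * h (N+1-s)
          - Cz (m+2) ((b:ℤ)-s) * Cz m ((b:ℤ)-(p-s)) * h (N-s)) := by
    rw [hS, winsum,
      show max (p-M) (p-r) = p-r from max_eq_right (by omega),
      show min M r = r from min_eq_right (by omega)]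
  rw [hwin]
  rcases le_or_gt p (2*r) with h2r | h2r
  · exact mul_nonneg (sub_nonneg.mpr (hgdec r h2r))
      (perpW b m M N p q r h hp0 hN0 hNM hq hr.1 hr.2 hhsym hhK hhdec)
  · rw [Finset.Icc_eq_empty (by omega), Finset.sum_empty, mul_zero]

theorem core (b m : ℕ) (M N : ℤ) (X Y : ℤ → ℝ)
    (hX0 : ∀ k, 0 ≤ X k) (hY0 : ∀ k, 0 ≤ Y k)
    (hXlc : ∀ k : ℤ, X k * X (k+2) ≤ X (k+1)^2) (hYlc : ∀ k : ℤ, Y k * Y (k+2) ≤ Y (k+1)^2)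
    (hXniz : ∀ i j k : ℤ, i < j → j < k → X i ≠ 0 → X k ≠ 0 → X j ≠ 0)
    (hYniz : ∀ i j k : ℤ, i < j → j < k → Y i ≠ 0 → Y k ≠ 0 → Y j ≠ 0)
    (hXlow : ∀ k : ℤ, k < 0 → X k = 0) (hXhigh : ∀ k : ℤ, (b:ℤ) < k → X k = 0)
    (hYlow : ∀ k : ℤ, k < 0 → Y k = 0)
    (hbM : (b:ℤ) ≤ M) (hN0 : 0 ≤ N) (hNM : N + 2 ≤ M) :
    (∑ k ∈ Finset.Icc (0:ℤ) M, Cz (m+2) ((b:ℤ)-k) * (X k * Y (N-k))) *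
    (∑ k ∈ Finset.Icc (0:ℤ) M, Cz m ((b:ℤ)-k) * (X k * Y (N+2-k)))
      ≤ (∑ k ∈ Finset.Icc (0:ℤ) M, Cz (m+1) ((b:ℤ)-k) * (X k * Y (N+1-k)))^2 := by
  have hM0 : (0:ℤ) ≤ M := by omega
  have expand : ∀ (u v : ℤ → ℝ), (∀ l : ℤ, l < 0 ∨ M < l → v l = 0) →
      (Finset.sum (Finset.Icc (0:ℤ) M) u) * (Finset.sum (Finset.Icc (0:ℤ) M) v)
        = ∑ p ∈ Finset.Icc (0:ℤ) (2*M), ∑ k ∈ Finset.Icc (0:ℤ) M, u k * v (p - k) := by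
    intro u v hv
    rw [Finset.sum_mul_sum,
      show (∑ p ∈ Finset.Icc (0:ℤ) (2*M), ∑ k ∈ Finset.Icc (0:ℤ) M, u k * v (p - k))
        = ∑ k ∈ Finset.Icc (0:ℤ) M, ∑ p ∈ Finset.Icc (0:ℤ) (2*M), u k * v (p - k) from
        Finset.sum_comm]
    refine Finset.sum_congr rfl fun k hk => ?_
    rw [Finset.mem_Icc] at hk
    have h1 : ∑ l ∈ Finset.Icc (0:ℤ) M, u k * v l
        = ∑ p ∈ Finset.Icc k (M+k), u k * v (p - k) := by
      rw [show Finset.Icc k (M+k) = (Finset.Icc (0:ℤ) M).map (addRightEmbedding k) from by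
          rw [Finset.map_add_right_Icc, zero_add],
        Finset.sum_map]
      refine Finset.sum_congr rfl fun l _ => ?_
      simp only [addRightEmbedding_apply]
      rw [add_sub_cancel_right]
    rw [h1]
    apply Finset.sum_subset
    · exact Finset.Icc_subset_Icc (by omega) (by omega)
    · intro x hx hnx
      rw [Finset.mem_Icc] at hx
      rw [Finset.mem_Icc] at hnx
      rw [hv (x-k) (by omega), mul_zero]
  have hvC : ∀ l : ℤ, l < 0 ∨ M < l → Cz m ((b:ℤ)-l) * (X l * Y (N+2-l)) = 0 := by
    intro l hl
    rcases hl with hl | hl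
    · rw [hXlow l hl]; ring
    · rw [hXhigh l (by omega)]; ring
  have hvB : ∀ l : ℤ, l < 0 ∨ M < l → Cz (m+1) ((b:ℤ)-l) * (X l * Y (N+1-l)) = 0 := by
    intro l hl
    rcases hl with hl | hl
    · rw [hXlow l hl]; ring
    · rw [hXhigh l (by omega)]; ring
  calc (∑ k ∈ Finset.Icc (0:ℤ) M, Cz (m+2) ((b:ℤ)-k) * (X k * Y (N-k))) *
      (∑ k ∈ Finset.Icc (0:ℤ) M, Cz m ((b:ℤ)-k) * (X k * Y (N+2-k)))
      = ∑ p ∈ Finset.Icc (0:ℤ) (2*M), ∑ k ∈ Finset.Icc (0:ℤ) M,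
          (Cz (m+2) ((b:ℤ)-k) * (X k * Y (N-k))) *
          (Cz m ((b:ℤ)-(p-k)) * (X (p-k) * Y (N+2-(p-k)))) := expand _ _ hvC
    _ ≤ ∑ p ∈ Finset.Icc (0:ℤ) (2*M), ∑ k ∈ Finset.Icc (0:ℤ) M,
          (Cz (m+1) ((b:ℤ)-k) * (X k * Y (N+1-k))) *
          (Cz (m+1) ((b:ℤ)-(p-k)) * (X (p-k) * Y (N+1-(p-k)))) := ?_
    _ = (∑ k ∈ Finset.Icc (0:ℤ) M, Cz (m+1) ((b:ℤ)-k) * (X k * Y (N+1-k))) *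
        (∑ k ∈ Finset.Icc (0:ℤ) M, Cz (m+1) ((b:ℤ)-k) * (X k * Y (N+1-k))) :=
        (expand _ _ hvB).symm
    _ = (∑ k ∈ Finset.Icc (0:ℤ) M, Cz (m+1) ((b:ℤ)-k) * (X k * Y (N+1-k)))^2 :=
        (pow_two _).symm
  apply Finset.sum_le_sum
  intro p hp
  rw [Finset.mem_Icc] at hp
  -- transfer the inner sums to the symmetric window Icc (p-M) M
  have trans : ∀ w : ℤ → ℝ, (∀ k:ℤ, (k < 0 ∨ M < k) → w k = 0) →
      (∀ k:ℤ, (p-k < 0 ∨ M < p-k) → w k = 0) →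
      Finset.sum (Finset.Icc (0:ℤ) M) w = Finset.sum (Finset.Icc (p-M) M) w := by
    intro w h1 h2
    have e1 : Finset.sum (Finset.Icc (0:ℤ) M) w = Finset.sum (Finset.Icc (-M) (2*M)) w :=
      Finset.sum_subset (Finset.Icc_subset_Icc (by omega) (by omega)) (fun k hk hnk => by
        rw [Finset.mem_Icc] at hk
        rw [Finset.mem_Icc] at hnk
        exact h1 k (by omega))
    have e2 : Finset.sum (Finset.Icc (p-M) M) w = Finset.sum (Finset.Icc (-M) (2*M)) w :=
      Finset.sum_subset (Finset.Icc_subset_Icc (by omega) (by omega)) (fun k hk hnk => by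
        rw [Finset.mem_Icc] at hk
        rw [Finset.mem_Icc] at hnk
        by_cases hkM : M < k
        · exact h1 k (Or.inr hkM)
        · exact h2 k (Or.inr (by omega)))
    rw [e1, ← e2]
  have t0 : ∑ k ∈ Finset.Icc (0:ℤ) M,
        (Cz (m+2) ((b:ℤ)-k) * (X k * Y (N-k))) *
          (Cz m ((b:ℤ)-(p-k)) * (X (p-k) * Y (N+2-(p-k))))
      = ∑ k ∈ Finset.Icc (p-M) M,
        (Cz (m+2) ((b:ℤ)-k) * (X k * Y (N-k))) *
          (Cz m ((b:ℤ)-(p-k)) * (X (p-k) * Y (N+2-(p-k)))) := by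
    apply trans
    · intro k hk
      rcases hk with hk | hk
      · rw [hXlow k hk]; ring
      · rw [hXhigh k (by omega)]; ring
    · intro k hk
      rcases hk with hk | hk
      · rw [hXlow (p-k) hk]; ring
      · rw [hXhigh (p-k) (by omega)]; ring
  have t1 : ∑ k ∈ Finset.Icc (0:ℤ) M,
        (Cz (m+1) ((b:ℤ)-k) * (X k * Y (N+1-k))) *
          (Cz (m+1) ((b:ℤ)-(p-k)) * (X (p-k) * Y (N+1-(p-k))))
      = ∑ k ∈ Finset.Icc (p-M) M,
        (Cz (m+1) ((b:ℤ)-k) * (X k * Y (N+1-k))) *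
          (Cz (m+1) ((b:ℤ)-(p-k)) * (X (p-k) * Y (N+1-(p-k)))) := by
    apply trans
    · intro k hk
      rcases hk with hk | hk
      · rw [hXlow k hk]; ring
      · rw [hXhigh k (by omega)]; ring
    · intro k hk
      rcases hk with hk | hk
      · rw [hXlow (p-k) hk]; ring
      · rw [hXhigh (p-k) (by omega)]; ring
  rw [t0, t1]
  have hperp := perp b m M N p (2*N+2-p)
    (fun s => X s * X (p-s)) (fun i => Y i * Y ((2*N+2-p) - i))
    hp.1 hp.2 hN0 hNM rfl
    (fun s => by
      show X s * X (p-s) = X (p-s) * X (p-(p-s))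
      rw [show p-(p-s) = s by ring]; ring)
    (fun i => by
      show Y i * Y (2*N+2-p-i) = Y (2*N+2-p-i) * Y (2*N+2-p-(2*N+2-p-i))
      rw [show 2*N+2-p-(2*N+2-p-i) = i by ring]; ring)
    (by
      show X (M+1) * X (p-(M+1)) = 0
      rw [hXhigh (M+1) (by omega)]; ring)
    (by
      show Y (2*M+3) * Y (2*N+2-p-(2*M+3)) = 0
      rw [hYlow (2*N+2-p-(2*M+3)) (by omega)]; ring)
    (by
      intro r h2r
      show X (r+1) * X (p-(r+1)) ≤ X r * X (p-r)
      have hst := step1 X hX0 hXlc hXniz (p-r) r (by omega)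
      calc X (r+1) * X (p-(r+1)) = X (p-r-1) * X (r+1) := by
            rw [show p-(r+1) = p-r-1 by ring]; ring
        _ ≤ X (p-r) * X r := hst
        _ = X r * X (p-r) := by ring)
    (by
      intro c h2c
      show Y (c+1) * Y (2*N+2-p-(c+1)) ≤ Y c * Y (2*N+2-p-c)
      have hst := step1 Y hY0 hYlc hYniz (2*N+2-p-c) c (by omega)
      calc Y (c+1) * Y (2*N+2-p-(c+1)) = Y (2*N+2-p-c-1) * Y (c+1) := by
            rw [show 2*N+2-p-(c+1) = 2*N+2-p-c-1 by ring]; ring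
        _ ≤ Y (2*N+2-p-c) * Y c := hst
        _ = Y c * Y (2*N+2-p-c) := by ring)
  have e0 : ∀ s ∈ Finset.Icc (p-M) M,
      (Cz (m+2) ((b:ℤ)-s) * (X s * Y (N-s))) *
        (Cz m ((b:ℤ)-(p-s)) * (X (p-s) * Y (N+2-(p-s))))
      = Cz (m+2) ((b:ℤ)-s) * Cz m ((b:ℤ)-(p-s)) *
        ((X s * X (p-s)) * (Y (N-s) * Y ((2*N+2-p) - (N-s)))) := by
    intro s _
    rw [show (2*N+2-p) - (N-s) = N+2-(p-s) by ring]
    ring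
  have e1 : ∀ s ∈ Finset.Icc (p-M) M,
      (Cz (m+1) ((b:ℤ)-s) * (X s * Y (N+1-s))) *
        (Cz (m+1) ((b:ℤ)-(p-s)) * (X (p-s) * Y (N+1-(p-s))))
      = Cz (m+1) ((b:ℤ)-s) * Cz (m+1) ((b:ℤ)-(p-s)) *
        ((X s * X (p-s)) * (Y (N+1-s) * Y ((2*N+2-p) - (N+1-s)))) := by
    intro s _
    rw [show (2*N+2-p) - (N+1-s) = N+1-(p-s) by ring]
    ring
  rw [Finset.sum_congr rfl e0, Finset.sum_congr rfl e1]
  exact hperp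

/-- Corollary 3.8: for integers `a ≥ b ≥ 0`, if `x`, `y` are
nonnegative log-concave sequences (no internal zeros), then the sequence
`z n = ∑_{k=0}^n C(a-n, b-k) x_k y_{n-k}` (where `C(m,j) = 0` unless
`0 ≤ j ≤ m`, so the term vanishes when `k > b`), defined for `0 ≤ n ≤ a`,
is log-concave. -/
theorem stmt_19 (a b : ℕ) (hab : b ≤ a) (x y : ℕ → ℝ)
    (hxnonneg : ∀ k, 0 ≤ x k) (hynonneg : ∀ k, 0 ≤ y k)
    (hxlc : ∀ k : ℕ, x k * x (k + 2) ≤ x (k + 1) ^ 2)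
    (hylc : ∀ k : ℕ, y k * y (k + 2) ≤ y (k + 1) ^ 2)
    (hxniz : ∀ i j k : ℕ, i < j → j < k → x i ≠ 0 → x k ≠ 0 → x j ≠ 0)
    (hyniz : ∀ i j k : ℕ, i < j → j < k → y i ≠ 0 → y k ≠ 0 → y j ≠ 0)
    (z : ℕ → ℝ)
    (hz : ∀ n : ℕ, n ≤ a → z n = ∑ k ∈ Finset.range (n + 1),
      (if k ≤ b then ((a - n).choose (b - k) : ℝ) else 0) * x k * y (n - k)) :
    ∀ n : ℕ, n + 2 ≤ a → z n * z (n + 2) ≤ z (n + 1) ^ 2 := by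
  intro n hn2
  set X : ℤ → ℝ := fun k => if 0 ≤ k ∧ k ≤ (b:ℤ) then x k.toNat else 0 with hX
  set Y : ℤ → ℝ := fun j => if 0 ≤ j then y j.toNat else 0 with hY
  -- sequence properties over ℤ
  have hX0 : ∀ k, 0 ≤ X k := by
    intro k; rw [hX]; dsimp only; split
    · exact hxnonneg _
    · exact le_refl 0
  have hY0 : ∀ k, 0 ≤ Y k := by
    intro k; rw [hY]; dsimp only; split
    · exact hynonneg _
    · exact le_refl 0
  have hXlow : ∀ k : ℤ, k < 0 → X k = 0 := by
    intro k hk; rw [hX]; dsimp only; rw [if_neg (by omega)]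
  have hXhigh : ∀ k : ℤ, (b:ℤ) < k → X k = 0 := by
    intro k hk; rw [hX]; dsimp only; rw [if_neg (by omega)]
  have hYlow : ∀ k : ℤ, k < 0 → Y k = 0 := by
    intro k hk; rw [hY]; dsimp only; rw [if_neg (by omega)]
  have hXeq : ∀ k : ℕ, (k:ℤ) ≤ (b:ℤ) → X k = x k := by
    intro k hk; rw [hX]; dsimp only; rw [if_pos ⟨by positivity, hk⟩, Int.toNat_natCast]
  have hYeq : ∀ k : ℕ, Y k = y k := by
    intro k; rw [hY]; dsimp only; rw [if_pos (by positivity), Int.toNat_natCast]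
  have hXlc : ∀ k : ℤ, X k * X (k+2) ≤ X (k+1)^2 := by
    intro k
    rcases lt_or_ge k 0 with hk | hk
    · rw [hXlow k hk, zero_mul]; positivity
    rcases lt_or_ge (b:ℤ) (k+2) with hk2 | hk2
    · rw [hXhigh (k+2) hk2, mul_zero]; positivity
    · have e0 : X k = x k.toNat := by rw [hX]; dsimp only; rw [if_pos ⟨hk, by omega⟩]
      have e1 : X (k+1) = x (k.toNat+1) := by
        rw [hX]; dsimp only; rw [if_pos ⟨by omega, by omega⟩]
        congr 1; omega
      have e2 : X (k+2) = x (k.toNat+2) := by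
        rw [hX]; dsimp only; rw [if_pos ⟨by omega, by omega⟩]
        congr 1; omega
      rw [e0, e1, e2]; exact hxlc k.toNat
  have hYlc : ∀ k : ℤ, Y k * Y (k+2) ≤ Y (k+1)^2 := by
    intro k
    rcases lt_or_ge k 0 with hk | hk
    · rw [hYlow k hk, zero_mul]; positivity
    · have e0 : Y k = y k.toNat := by rw [hY]; dsimp only; rw [if_pos hk]
      have e1 : Y (k+1) = y (k.toNat+1) := by
        rw [hY]; dsimp only; rw [if_pos (by omega)]
        congr 1; omega
      have e2 : Y (k+2) = y (k.toNat+2) := by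
        rw [hY]; dsimp only; rw [if_pos (by omega)]
        congr 1; omega
      rw [e0, e1, e2]; exact hylc k.toNat
  have hXniz : ∀ i j k : ℤ, i < j → j < k → X i ≠ 0 → X k ≠ 0 → X j ≠ 0 := by
    intro i j k hij hjk hi hk
    have hib : 0 ≤ i ∧ i ≤ (b:ℤ) := by
      by_contra hcon
      apply hi
      rw [hX]; dsimp only; rw [if_neg hcon]
    have hkb : 0 ≤ k ∧ k ≤ (b:ℤ) := by
      by_contra hcon
      apply hk
      rw [hX]; dsimp only; rw [if_neg hcon]
    have hjb : 0 ≤ j ∧ j ≤ (b:ℤ) := ⟨by omega, by omega⟩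
    have ei : X i = x i.toNat := by rw [hX]; dsimp only; rw [if_pos hib]
    have ek : X k = x k.toNat := by rw [hX]; dsimp only; rw [if_pos hkb]
    have ej : X j = x j.toNat := by rw [hX]; dsimp only; rw [if_pos hjb]
    rw [ej]
    rw [ei] at hi; rw [ek] at hk
    exact hxniz i.toNat j.toNat k.toNat (by omega) (by omega) hi hk
  have hYniz : ∀ i j k : ℤ, i < j → j < k → Y i ≠ 0 → Y k ≠ 0 → Y j ≠ 0 := by
    intro i j k hij hjk hi hk
    have hib : 0 ≤ i := by
      by_contra hcon
      apply hi
      rw [hY]; dsimp only; rw [if_neg hcon]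
    have ei : Y i = y i.toNat := by rw [hY]; dsimp only; rw [if_pos hib]
    have ek : Y k = y k.toNat := by rw [hY]; dsimp only; rw [if_pos (by omega)]
    have ej : Y j = y j.toNat := by rw [hY]; dsimp only; rw [if_pos (by omega)]
    rw [ej]
    rw [ei] at hi; rw [ek] at hk
    exact hyniz i.toNat j.toNat k.toNat (by omega) (by omega) hi hk
  -- transfer z to a ℤ-indexed sum
  have ztrans : ∀ j : ℕ, j ≤ a → z j = ∑ k ∈ Finset.Icc (0:ℤ) (a:ℤ),
      Cz (a-j) ((b:ℤ)-k) * (X k * Y ((j:ℤ)-k)) := by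
    intro j hj
    rw [hz j hj]
    have hshrink : ∑ k ∈ Finset.Icc (0:ℤ) (a:ℤ), Cz (a-j) ((b:ℤ)-k) * (X k * Y ((j:ℤ)-k))
        = ∑ k ∈ Finset.Icc (0:ℤ) (j:ℤ), Cz (a-j) ((b:ℤ)-k) * (X k * Y ((j:ℤ)-k)) := by
      symm
      apply Finset.sum_subset (Finset.Icc_subset_Icc le_rfl (by exact_mod_cast hj))
      intro k hk hnk
      rw [Finset.mem_Icc] at hk
      rw [Finset.mem_Icc] at hnk
      rw [hYlow ((j:ℤ)-k) (by omega)]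
      ring
    rw [hshrink]
    symm
    apply Finset.sum_nbij' (fun k : ℤ => k.toNat) (fun k : ℕ => (k:ℤ))
    · intro k hk
      rw [Finset.mem_Icc] at hk
      rw [Finset.mem_range]
      omega
    · intro k hk
      rw [Finset.mem_range] at hk
      rw [Finset.mem_Icc]
      omega
    · intro k hk
      rw [Finset.mem_Icc] at hk
      omega
    · intro k _
      exact Int.toNat_natCast k
    · intro k hk
      rw [Finset.mem_Icc] at hk
      rcases le_or_gt k (b:ℤ) with hkb | hkb
      · have eX : X k = x k.toNat := by
          rw [hX]; dsimp only; rw [if_pos ⟨hk.1, hkb⟩]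
        have eY : Y ((j:ℤ)-k) = y (j - k.toNat) := by
          rw [hY]; dsimp only; rw [if_pos (by omega)]
          congr 1; omega
        have eC : Cz (a-j) ((b:ℤ)-k) = ((a-j).choose (b - k.toNat) : ℝ) := by
          rw [show (b:ℤ)-k = ((b - k.toNat : ℕ) : ℤ) by omega, Cz_coe]
        rw [eX, eY, eC, if_pos (by omega)]
        ring
      · rw [if_neg (by omega), hXhigh k hkb]
        ring
  rw [ztrans n (by omega), ztrans (n+1) (by omega), ztrans (n+2) (by omega),
    show a - n = (a-n-2)+2 by omega, show a - (n+1) = (a-n-2)+1 by omega,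
    show a - (n+2) = a-n-2 by omega]
  have hcore := core b (a-n-2) (a:ℤ) (n:ℤ) X Y hX0 hY0 hXlc hYlc hXniz hYniz
    hXlow hXhigh hYlow (by exact_mod_cast hab) (by positivity) (by exact_mod_cast hn2)
  push_cast
  convert hcore using 3
end
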